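/- For every η ∈ ℝ with |η| ≤ 1, 2 + ((1 + η)/2)·Real.logb 2 ((1 + η)/4) + ((1 − η)/2)·Real.logb 2 ((1 − η)/4) ≥ η² / (2·Real.log 2). -/

import Mathlib

open Real Set

private lemma hasDerivAt_G (x : ℝ) (h1 : (0:ℝ) < 1 + x) (h2 : (0:ℝ) < 1 - x) :
    HasDerivAt (fun y : ℝ => Real.log (1+y) - Real.log (1-y) - 2*y)
      (1/(1+x) + 1/(1-x) - 2) x := by
  have hA : HasDerivAt (fun y : ℝ => 1 + y) 1 x := by
    simpa using (hasDerivAt_id x).const_add (1:ℝ)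
  have hB : HasDerivAt (fun y : ℝ => 1 - y) (-1) x := by
    simpa using (hasDerivAt_id x).const_sub (1:ℝ)
  have hlogA : HasDerivAt (fun y : ℝ => Real.log (1+y)) (1/(1+x)) x := by
    simpa [one_div, Function.comp_def] using (Real.hasDerivAt_log h1.ne').comp x hA
  have hlogB : HasDerivAt (fun y : ℝ => Real.log (1-y)) (-(1/(1-x))) x := by
    have := (Real.hasDerivAt_log h2.ne').comp x hB
    simpa [one_div, Function.comp_def] using this
  have h2x : HasDerivAt (fun y : ℝ => 2*y) 2 x := by
    simpa using (hasDerivAt_id x).const_mul (2:ℝ)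
  have := (hlogA.sub hlogB).sub h2x
  exact this.congr_deriv (by ring)

private lemma hasDerivAt_F (x : ℝ) (h1 : (0:ℝ) < 1 + x) (h2 : (0:ℝ) < 1 - x) :
    HasDerivAt (fun y : ℝ => (1+y)*Real.log (1+y) + (1-y)*Real.log (1-y) - y^2)
      (Real.log (1+x) - Real.log (1-x) - 2*x) x := by
  have hA : HasDerivAt (fun y : ℝ => 1 + y) 1 x := by
    simpa using (hasDerivAt_id x).const_add (1:ℝ)
  have hB : HasDerivAt (fun y : ℝ => 1 - y) (-1) x := by
    simpa using (hasDerivAt_id x).const_sub (1:ℝ)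
  have hlogA : HasDerivAt (fun y : ℝ => Real.log (1+y)) (1/(1+x)) x := by
    simpa [one_div, Function.comp_def] using (Real.hasDerivAt_log h1.ne').comp x hA
  have hlogB : HasDerivAt (fun y : ℝ => Real.log (1-y)) (-(1/(1-x))) x := by
    have := (Real.hasDerivAt_log h2.ne').comp x hB
    simpa [one_div, Function.comp_def] using this
  have hP : HasDerivAt (fun y : ℝ => (1+y)*Real.log (1+y))
      (Real.log (1+x) + 1) x := by
    have := hA.mul hlogA
    exact this.congr_deriv (by rw [mul_one_div_cancel h1.ne']; ring)
  have hQ : HasDerivAt (fun y : ℝ => (1-y)*Real.log (1-y))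
      (-Real.log (1-x) - 1) x := by
    have := hB.mul hlogB
    exact this.congr_deriv (by rw [mul_neg, mul_one_div_cancel h2.ne']; ring)
  have hpow : HasDerivAt (fun y : ℝ => y^2) (2*x) x := by
    simpa using hasDerivAt_pow 2 x
  have := (hP.add hQ).sub hpow
  exact this.congr_deriv (by ring)

private lemma G_nonneg {x : ℝ} (hx0 : 0 ≤ x) (hx1 : x < 1) :
    0 ≤ Real.log (1+x) - Real.log (1-x) - 2*x := by
  set G : ℝ → ℝ := fun y => Real.log (1+y) - Real.log (1-y) - 2*y with hG
  have hmono : MonotoneOn G (Ico (0:ℝ) 1) := by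
    apply monotoneOn_of_deriv_nonneg (convex_Ico 0 1)
    · apply ContinuousOn.sub (ContinuousOn.sub ?_ ?_) (by fun_prop)
      · apply ContinuousOn.log (by fun_prop)
        intro y hy
        simp only [mem_Ico] at hy
        nlinarith [hy.1]
      · apply ContinuousOn.log (by fun_prop)
        intro y hy
        simp only [mem_Ico] at hy
        nlinarith [hy.2]
    · intro y hy
      rw [interior_Ico] at hy
      simp only [mem_Ioo] at hy
      exact (hasDerivAt_G y (by linarith [hy.1]) (by linarith [hy.2])).differentiableAt.differentiableWithinAt
    · intro y hy
      rw [interior_Ico] at hy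
      simp only [mem_Ioo] at hy
      have h1 : (0:ℝ) < 1 + y := by linarith
      have h2 : (0:ℝ) < 1 - y := by linarith
      rw [(hasDerivAt_G y h1 h2).deriv]
      have h1' : (1:ℝ) + y ≠ 0 := h1.ne'
      have h2' : (1:ℝ) - y ≠ 0 := h2.ne'
      have heq : 1/(1+y) + 1/(1-y) - 2 = 2*y^2 / ((1+y)*(1-y)) := by
        field_simp; ring
      rw [heq]
      exact div_nonneg (by positivity) (le_of_lt (mul_pos h1 h2))
  have h0 : G 0 = 0 := by simp [hG]
  have := hmono (by simp : (0:ℝ) ∈ Ico (0:ℝ) 1) (by simp [hx0, hx1] : x ∈ Ico (0:ℝ) 1) hx0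
  rw [h0] at this
  exact this

private lemma F_nonneg {x : ℝ} (hx0 : 0 ≤ x) (hx1 : x ≤ 1) :
    x^2 ≤ (1+x)*Real.log (1+x) + (1-x)*Real.log (1-x) := by
  set F : ℝ → ℝ := fun y => (1+y)*Real.log (1+y) + (1-y)*Real.log (1-y) - y^2 with hF
  have hmono : MonotoneOn F (Icc (0:ℝ) 1) := by
    apply monotoneOn_of_deriv_nonneg (convex_Icc 0 1)
    · have : ∀ y : ℝ, F y = -Real.negMulLog (1+y) - Real.negMulLog (1-y) - y^2 := by
        intro y; simp [hF, Real.negMulLog]; ring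
      rw [show F = fun y => -Real.negMulLog (1+y) - Real.negMulLog (1-y) - y^2 from funext this]
      have h := Real.continuous_negMulLog
      fun_prop
    · intro y hy
      rw [interior_Icc] at hy
      simp only [mem_Ioo] at hy
      exact (hasDerivAt_F y (by linarith [hy.1]) (by linarith [hy.2])).differentiableAt.differentiableWithinAt
    · intro y hy
      rw [interior_Icc] at hy
      simp only [mem_Ioo] at hy
      rw [(hasDerivAt_F y (by linarith [hy.1]) (by linarith [hy.2])).deriv]
      linarith [G_nonneg hy.1.le hy.2]
  have h0 : F 0 = 0 := by simp [hF]
  have := hmono (by simp : (0:ℝ) ∈ Icc (0:ℝ) 1) (by simp [hx0, hx1] : x ∈ Icc (0:ℝ) 1) hx0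
  rw [h0] at this
  simp only [hF] at this
  linarith

private lemma key {η : ℝ} (h : |η| ≤ 1) :
    η^2 ≤ (1+η)*Real.log (1+η) + (1-η)*Real.log (1-η) := by
  rcases le_or_gt 0 η with h0 | h0
  · exact F_nonneg h0 (abs_le.mp h).2
  · have := F_nonneg (x := -η) (by linarith) (by linarith [(abs_le.mp h).1])
    calc η^2 = (-η)^2 := by ring
    _ ≤ (1+(-η))*Real.log (1+(-η)) + (1-(-η))*Real.log (1-(-η)) := this
    _ = (1+η)*Real.log (1+η) + (1-η)*Real.log (1-η) := by
        rw [show (1:ℝ)+(-η) = 1-η by ring, show (1:ℝ)-(-η) = 1+η by ring]; ring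

/-- The paper's lower bound `LB = 2 - 2𝓛((1+η)/4) - 2𝓛((1-η)/4)` (bits) dominates
the conventional bound `η²/2` (nats), i.e. `η²/(2 ln 2)` in bits. -/
theorem LB_stricter_than_conventional :
    ∀ η : ℝ, |η| ≤ 1 →
      2 + ((1 + η) / 2) * Real.logb 2 ((1 + η) / 4) +
          ((1 - η) / 2) * Real.logb 2 ((1 - η) / 4) ≥
        η ^ 2 / (2 * Real.log 2) := by
  intro η hη
  have hlog2 : (0:ℝ) < Real.log 2 := Real.log_pos (by norm_num)
  have hlogge : (0.6931471803:ℝ) < Real.log 2 := Real.log_two_gt_d9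
  have h1 : (0:ℝ) ≤ 1 + η := by linarith [(abs_le.mp hη).1]
  have h2 : (0:ℝ) ≤ 1 - η := by linarith [(abs_le.mp hη).2]
  have hhalf : Real.logb 2 (1/2 : ℝ) = -1 := by
    rw [show (1/2:ℝ) = 2⁻¹ by norm_num, Real.logb_inv, Real.logb_self_eq_one] <;> norm_num
  rcases eq_or_lt_of_le h1 with hb1 | hb1
  · -- η = -1
    have hη1 : η = -1 := by linarith
    subst hη1
    norm_num
    rw [hhalf]
    nlinarith [mul_inv_cancel₀ hlog2.ne', hlog2, hlogge, inv_pos.mpr hlog2]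
  rcases eq_or_lt_of_le h2 with hb2 | hb2
  · -- η = 1
    have hη1 : η = 1 := by linarith
    subst hη1
    norm_num
    rw [hhalf]
    nlinarith [mul_inv_cancel₀ hlog2.ne', hlog2, hlogge, inv_pos.mpr hlog2]
  have hkey := key hη
  have e1 : Real.logb 2 ((1 + η) / 4) = (Real.log (1+η) - 2 * Real.log 2) / Real.log 2 := by
    rw [Real.logb, Real.log_div (by linarith) (by norm_num),
      show (4:ℝ) = 2^2 by norm_num, Real.log_pow]
    push_cast; ring_nf
  have e2 : Real.logb 2 ((1 - η) / 4) = (Real.log (1-η) - 2 * Real.log 2) / Real.log 2 := by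
    rw [Real.logb, Real.log_div (by linarith) (by norm_num),
      show (4:ℝ) = 2^2 by norm_num, Real.log_pow]
    push_cast; ring_nf
  rw [e1, e2, ge_iff_le, div_le_iff₀ (by linarith)]
  have hne : Real.log 2 ≠ 0 := hlog2.ne'
  field_simp
  nlinarith [hkey, hlog2]
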